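/- Let A = A_1 ⊔ A_2 ⊔ A_3 be a (3,4)-net in P^2(C) all of whose multiple points have multiplicity 2 or 3. Then exactly one of the following holds: (1) no class contains three concurrent lines and A has exactly 16 triple points (the mixed ones); (2) each of the three classes contains exactly one triple of concurrent lines and A has exactly 19 triple points; (3) exactly one class contains a triple of concurrent lines and A has exactly 17 triple points. -/

import Mathlib

open scoped Classical

noncomputable section

/-- The complex projective plane `P²(ℂ)`. -/
abbrev ProjPlane : Type := Projectivization ℂ (Fin 3 → ℂ)

/-- A subset of `P²(ℂ)` is a projective line if it is the zero locus of a nonzero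
linear form. -/
def IsProjLine (S : Set ProjPlane) : Prop :=
  ∃ f : (Fin 3 → ℂ) →ₗ[ℂ] ℂ, f ≠ 0 ∧ S = {p : ProjPlane | f p.rep = 0}

/-- The lines of the arrangement `A` passing through the point `p`. -/
def linesThrough (A : Finset (Set ProjPlane)) (p : ProjPlane) : Finset (Set ProjPlane) :=
  A.filter fun L => p ∈ L

/-- The multiplicity of a point `p` with respect to the arrangement `A`. -/
def mult (A : Finset (Set ProjPlane)) (p : ProjPlane) : ℕ :=
  (linesThrough A p).card

/-- `p` is a multiple point of the arrangement `A` (at least two lines pass through it). -/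
def IsMultPoint (A : Finset (Set ProjPlane)) (p : ProjPlane) : Prop :=
  2 ≤ mult A p

/-- A `q`-cocycle of the line arrangement `A`: for every multiple point `p`,
if `q` divides the multiplicity then the values of `η` on the lines through `p` sum to `0`,
and otherwise `η` is constant on the lines through `p`. -/
def IsCocycle (q : ℕ) (A : Finset (Set ProjPlane)) (η : Set ProjPlane → ZMod q) : Prop :=
  ∀ p : ProjPlane, IsMultPoint A p →
    ((q ∣ mult A p → ∑ L ∈ linesThrough A p, η L = 0) ∧
     (¬ q ∣ mult A p → ∀ L ∈ linesThrough A p, ∀ K ∈ linesThrough A p, η L = η K))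

/-- A function on lines is non-constant on the arrangement `A`. -/
def NonConstant {α : Type*} (A : Finset (Set ProjPlane)) (η : Set ProjPlane → α) : Prop :=
  ∃ L ∈ A, ∃ K ∈ A, η L ≠ η K

/-- A `(k,q)`-net structure on the line arrangement `A`, with classes `C 0, …, C (k-1)`:
the classes partition `A` into `k` classes of `q` lines each, and whenever two lines from
different classes meet, their intersection point lies on exactly one line of each class. -/
def IsNet (k q : ℕ) (A : Finset (Set ProjPlane)) (C : Fin k → Finset (Set ProjPlane)) : Prop :=
  (∀ L ∈ A, IsProjLine L) ∧
  A.card = k * q ∧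
  (∀ i, (C i).card = q) ∧
  (∀ i j, i ≠ j → Disjoint (C i) (C j)) ∧
  (∀ i, C i ⊆ A) ∧
  (∀ L ∈ A, ∃ i, L ∈ C i) ∧
  (∀ i j, i ≠ j → ∀ L ∈ C i, ∀ K ∈ C j, ∀ p : ProjPlane, p ∈ L → p ∈ K →
    ∀ m : Fin k, ∃! N, N ∈ C m ∧ p ∈ N)

/-- Lattice isomorphism of two line arrangements: a bijection between the lines such that
a subfamily of lines has a common point iff the image subfamily has a common point. -/
def LatticeIso (A B : Finset (Set ProjPlane)) : Prop :=
  ∃ φ : Set ProjPlane → Set ProjPlane, Set.BijOn φ ↑A ↑B ∧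
    ∀ S : Finset (Set ProjPlane), S ⊆ A →
      ((∃ p : ProjPlane, ∀ L ∈ S, p ∈ L) ↔ ∃ p : ProjPlane, ∀ L ∈ S, p ∈ φ L)

/-- The projective line with homogeneous equation `a·x + b·y + c·z = 0`. -/
def lineOf (a b c : ℂ) : Set ProjPlane :=
  {p : ProjPlane | a * p.rep 0 + b * p.rep 1 + c * p.rep 2 = 0}

/-- `S` contains three distinct concurrent lines. -/
def HasConcurrentTriple (S : Finset (Set ProjPlane)) : Prop :=
  ∃ L ∈ S, ∃ M ∈ S, ∃ N ∈ S, L ≠ M ∧ L ≠ N ∧ M ≠ N ∧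
    ∃ p : ProjPlane, p ∈ L ∧ p ∈ M ∧ p ∈ N


namespace S7
open Matrix

abbrev V3 : Type := Fin 3 → ℂ

lemma dot3 (u v : V3) : u ⬝ᵥ v = u 0 * v 0 + u 1 * v 1 + u 2 * v 2 := by
  simp [dotProduct, Fin.sum_univ_three]

lemma cross0 (u v : V3) : crossProduct u v 0 = u 1 * v 2 - u 2 * v 1 := by
  simp [cross_apply]
lemma cross1 (u v : V3) : crossProduct u v 1 = u 2 * v 0 - u 0 * v 2 := by
  simp [cross_apply]
lemma cross2 (u v : V3) : crossProduct u v 2 = u 0 * v 1 - u 1 * v 0 := by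
  simp [cross_apply]

lemma vec_ne_zero_iff (u : V3) : u ≠ 0 ↔ u 0 ≠ 0 ∨ u 1 ≠ 0 ∨ u 2 ≠ 0 := by
  constructor
  · intro h
    by_contra hc
    push_neg at hc
    apply h
    funext i
    fin_cases i <;> simp [hc.1, hc.2.1, hc.2.2]
  · rintro (h | h | h) h0 <;> simp [h0] at h

lemma smul_apply' (c : ℂ) (u : V3) (i : Fin 3) : (c • u) i = c * u i := rfl

lemma vec_eq {v w : V3} (h0 : v 0 = w 0) (h1 : v 1 = w 1) (h2 : v 2 = w 2) : v = w := by
  funext i; fin_cases i <;> assumption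

/-- cross product zero criterion -/
lemma cross_eq_zero_imp {u v : V3} (hu : u ≠ 0) (h : crossProduct u v = 0) :
    ∃ c : ℂ, v = c • u := by
  have e0 : u 1 * v 2 - u 2 * v 1 = 0 := by rw [← cross0 u v, h]; rfl
  have e1 : u 2 * v 0 - u 0 * v 2 = 0 := by rw [← cross1 u v, h]; rfl
  have e2 : u 0 * v 1 - u 1 * v 0 = 0 := by rw [← cross2 u v, h]; rfl
  rcases (vec_ne_zero_iff u).1 hu with h0 | h1 | h1
  · refine ⟨v 0 / u 0, vec_eq ?_ ?_ ?_⟩ <;> rw [smul_apply'] <;> field_simp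
    · linear_combination e2
    · linear_combination -e1
  · refine ⟨v 1 / u 1, vec_eq ?_ ?_ ?_⟩ <;> rw [smul_apply'] <;> field_simp
    · linear_combination -e2
    · linear_combination e0
  · refine ⟨v 2 / u 2, vec_eq ?_ ?_ ?_⟩ <;> rw [smul_apply'] <;> field_simp
    · linear_combination e1
    · linear_combination -e0

lemma cross_cross_eq (u v w : V3) :
    crossProduct (crossProduct u v) w = (w ⬝ᵥ u) • v - (w ⬝ᵥ v) • u := by
  refine vec_eq ?_ ?_ ?_ <;>
    simp only [Pi.sub_apply, smul_apply', cross0, cross1, cross2, dot3] <;> ring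

lemma perp_perp {u v w : V3} (hcross : crossProduct u v ≠ 0)
    (h1 : w ⬝ᵥ u = 0) (h2 : w ⬝ᵥ v = 0) : ∃ c : ℂ, w = c • crossProduct u v := by
  apply cross_eq_zero_imp hcross
  rw [cross_cross_eq, h1, h2]
  simp

lemma pappus_dot (a b c d q : V3)
    (hB : a ⬝ᵥ crossProduct c d ≠ 0) (hD : a ⬝ᵥ crossProduct b c ≠ 0)
    (h1 : crossProduct (crossProduct a d) (crossProduct b c) ⬝ᵥ q = 0)
    (h2 : crossProduct (crossProduct a (c + d)) (crossProduct (a + b) c) ⬝ᵥ q = 0) :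
    crossProduct (crossProduct b (c + d)) (crossProduct (a + b) d) ⬝ᵥ q = 0 := by
  have key : (a ⬝ᵥ crossProduct c d) * (a ⬝ᵥ crossProduct b c) *
      (crossProduct (crossProduct b (c + d)) (crossProduct (a + b) d) ⬝ᵥ q) =
      (-((b ⬝ᵥ crossProduct c d + a ⬝ᵥ crossProduct c d) *
        (a ⬝ᵥ crossProduct b d + a ⬝ᵥ crossProduct b c))) *
      (crossProduct (crossProduct a d) (crossProduct b c) ⬝ᵥ q) +
      ((b ⬝ᵥ crossProduct c d) * (a ⬝ᵥ crossProduct b d)) *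
      (crossProduct (crossProduct a (c + d)) (crossProduct (a + b) c) ⬝ᵥ q) := by
    simp only [dot3, cross0, cross1, cross2, Pi.add_apply]
    ring
  rw [h1, h2] at key
  simp only [mul_zero, zero_add, add_zero] at key
  rcases mul_eq_zero.1 key with h | h
  · exact absurd h (mul_ne_zero hB hD)
  · exact h

open Projectivization

def lineN (n : V3) : Set ProjPlane := {p : ProjPlane | n ⬝ᵥ p.rep = 0}

lemma mem_lineN {n : V3} {p : ProjPlane} : p ∈ lineN n ↔ n ⬝ᵥ p.rep = 0 := Iff.rfl

lemma mem_lineN_mk {n v : V3} (hv : v ≠ 0) :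
    Projectivization.mk ℂ v hv ∈ lineN n ↔ n ⬝ᵥ v = 0 := by
  obtain ⟨a, ha⟩ := Projectivization.exists_smul_eq_mk_rep ℂ v hv
  have hrep : (Projectivization.mk ℂ v hv).rep = (a : ℂ) • v := by
    rw [← ha]; rfl
  rw [mem_lineN, hrep, dotProduct_smul, smul_eq_mul, mul_eq_zero]
  have : (a : ℂ) ≠ 0 := a.ne_zero
  tauto

noncomputable def dotL (n : V3) : V3 →ₗ[ℂ] ℂ where
  toFun x := n ⬝ᵥ x
  map_add' x y := by simp [dotProduct_add]
  map_smul' c x := by simp [dotProduct_smul]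

lemma isProjLine_lineN {n : V3} (hn : n ≠ 0) : IsProjLine (lineN n) := by
  refine ⟨dotL n, ?_, rfl⟩
  rcases (vec_ne_zero_iff n).1 hn with h | h | h
  · intro hf
    apply h
    have := congrArg (fun f => f (Pi.single (0 : Fin 3) 1)) hf
    simpa [dotL, dot3, Pi.single_apply] using this
  · intro hf
    apply h
    have := congrArg (fun f => f (Pi.single (1 : Fin 3) 1)) hf
    simpa [dotL, dot3, Pi.single_apply] using this
  · intro hf
    apply h
    have := congrArg (fun f => f (Pi.single (2 : Fin 3) 1)) hf
    simpa [dotL, dot3, Pi.single_apply] using this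

lemma exists_normal {L : Set ProjPlane} (hL : IsProjLine L) :
    ∃ n : V3, n ≠ 0 ∧ L = lineN n := by
  obtain ⟨f, hf, hLf⟩ := hL
  set n : V3 := fun i => f (fun j => if i = j then 1 else 0) with hn
  have key : ∀ x : V3, f x = n ⬝ᵥ x := by
    intro x
    rw [LinearMap.pi_apply_eq_sum_univ f x, dot3, Fin.sum_univ_three]
    simp only [hn, smul_eq_mul]
    ring
  refine ⟨n, ?_, ?_⟩
  · intro h0
    apply hf
    apply LinearMap.ext
    intro x
    rw [key, h0]
    simp
  · rw [hLf]
    ext p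
    simp only [Set.mem_setOf_eq, mem_lineN, key]

lemma lineN_eq_of_smul {m : V3} {c : ℂ} (hc : c ≠ 0) : lineN m = lineN (c • m) := by
  ext p
  simp only [mem_lineN, smul_dotProduct, smul_eq_mul, mul_eq_zero]
  tauto

lemma normals_indep {L M : Set ProjPlane} (hL : IsProjLine L) (hM : IsProjLine M)
    (hne : L ≠ M) {m n : V3} (hm : m ≠ 0) (hn : n ≠ 0)
    (hLm : L = lineN m) (hMn : M = lineN n) : crossProduct m n ≠ 0 := by
  intro hc
  obtain ⟨c, hcc⟩ := cross_eq_zero_imp hm hc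
  have hc0 : c ≠ 0 := by rintro rfl; simp at hcc; exact hn hcc
  exact hne (by rw [hLm, hMn, hcc, lineN_eq_of_smul hc0])

lemma exists_point_on_two {L M : Set ProjPlane} (hL : IsProjLine L) (hM : IsProjLine M)
    (hne : L ≠ M) : ∃ p : ProjPlane, p ∈ L ∧ p ∈ M := by
  obtain ⟨m, hm, hLm⟩ := exists_normal hL
  obtain ⟨n, hn, hMn⟩ := exists_normal hM
  have hc := normals_indep hL hM hne hm hn hLm hMn
  refine ⟨Projectivization.mk ℂ (crossProduct m n) hc, ?_, ?_⟩
  · rw [hLm, mem_lineN_mk]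
    exact dot_self_cross m n
  · rw [hMn, mem_lineN_mk]
    exact dot_cross_self m n

lemma rep_cross_ne_zero {p q : ProjPlane} (h : p ≠ q) :
    crossProduct p.rep q.rep ≠ 0 := by
  intro hc
  obtain ⟨c, hcc⟩ := cross_eq_zero_imp p.rep_nonzero hc
  have hc0 : c ≠ 0 := by rintro rfl; simp at hcc; exact q.rep_nonzero hcc
  refine absurd ?_ (Ne.symm h)
  conv_lhs => rw [← q.mk_rep]
  conv_rhs => rw [← p.mk_rep]
  rw [Projectivization.mk_eq_mk_iff']
  exact ⟨c, hcc.symm⟩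

lemma line_eq_of_two_points {L M : Set ProjPlane} (hL : IsProjLine L) (hM : IsProjLine M)
    {p q : ProjPlane} (hpq : p ≠ q) (hpL : p ∈ L) (hqL : q ∈ L) (hpM : p ∈ M)
    (hqM : q ∈ M) : L = M := by
  obtain ⟨m, hm, hLm⟩ := exists_normal hL
  obtain ⟨n, hn, hMn⟩ := exists_normal hM
  have hcr := rep_cross_ne_zero hpq
  rw [hLm] at hpL hqL
  rw [hMn] at hpM hqM
  obtain ⟨c, hc⟩ := perp_perp hcr hpL hqL
  obtain ⟨c', hc'⟩ := perp_perp hcr hpM hqM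
  have hcne : c ≠ 0 := by rintro rfl; simp at hc; exact hm hc
  have hc'ne : c' ≠ 0 := by rintro rfl; simp at hc'; exact hn hc'
  rw [hLm, hMn, hc, hc', ← lineN_eq_of_smul hcne, ← lineN_eq_of_smul hc'ne]

lemma point_eq_of_two_lines {L M : Set ProjPlane} (hL : IsProjLine L) (hM : IsProjLine M)
    (hne : L ≠ M) {p q : ProjPlane} (hpL : p ∈ L) (hpM : p ∈ M) (hqL : q ∈ L)
    (hqM : q ∈ M) : p = q := by
  by_contra hpq
  exact hne (line_eq_of_two_points hL hM hpq hpL hqL hpM hqM)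

instance : Nonempty ProjPlane :=
  ⟨Projectivization.mk ℂ (Pi.single 0 1) (by
    intro h
    have := congrFun h 0
    simp [Pi.single_apply] at this)⟩

noncomputable def interPt (L M : Set ProjPlane) : ProjPlane :=
  if h : ∃ p : ProjPlane, p ∈ L ∧ p ∈ M then h.choose else Classical.arbitrary _

lemma interPt_mem {L M : Set ProjPlane} (hL : IsProjLine L) (hM : IsProjLine M)
    (hne : L ≠ M) : interPt L M ∈ L ∧ interPt L M ∈ M := by
  have h := exists_point_on_two hL hM hne
  rw [interPt, dif_pos h]
  exact h.choose_spec

lemma cross_cross_cross (a b e : V3) :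
    crossProduct (crossProduct a b) (crossProduct a e) = (e ⬝ᵥ crossProduct a b) • a := by
  refine vec_eq ?_ ?_ ?_ <;>
    simp only [smul_apply', cross0, cross1, cross2, dot3] <;> ring

lemma cross_smul_smul (s t : ℂ) (X Y : V3) :
    crossProduct (s • X) (t • Y) = (s * t) • crossProduct X Y := by
  refine vec_eq ?_ ?_ ?_ <;> simp only [smul_apply', cross0, cross1, cross2, Pi.smul_apply,
    smul_eq_mul] <;> ring

lemma concurrent_normalize {L1 L2 L3 : Set ProjPlane}
    (hL1 : IsProjLine L1) (hL2 : IsProjLine L2) (hL3 : IsProjLine L3)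
    (h12 : L1 ≠ L2) (h13 : L1 ≠ L3) (h23 : L2 ≠ L3)
    {p0 : ProjPlane} (hp1 : p0 ∈ L1) (hp2 : p0 ∈ L2) (hp3 : p0 ∈ L3) :
    ∃ a b : V3, a ≠ 0 ∧ b ≠ 0 ∧ a + b ≠ 0 ∧
      L1 = lineN a ∧ L2 = lineN b ∧ L3 = lineN (a + b) := by
  obtain ⟨a0, ha0, hLa⟩ := exists_normal hL1
  obtain ⟨b0, hb0, hLb⟩ := exists_normal hL2
  obtain ⟨e, he0, hLe⟩ := exists_normal hL3
  have hab : crossProduct a0 b0 ≠ 0 := normals_indep hL1 hL2 h12 ha0 hb0 hLa hLb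
  have hae : crossProduct a0 e ≠ 0 := normals_indep hL1 hL3 h13 ha0 he0 hLa hLe
  -- p0.rep is proportional to cross a0 b0
  have ha' : a0 ⬝ᵥ p0.rep = 0 := by rw [hLa] at hp1; exact hp1
  have hb' : b0 ⬝ᵥ p0.rep = 0 := by rw [hLb] at hp2; exact hp2
  have he' : e ⬝ᵥ p0.rep = 0 := by rw [hLe] at hp3; exact hp3
  obtain ⟨k, hk⟩ := perp_perp hab (by rwa [dotProduct_comm]) (by rwa [dotProduct_comm])
  have hk0 : k ≠ 0 := by rintro rfl; simp at hk; exact p0.rep_nonzero hk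
  have hecr : e ⬝ᵥ crossProduct a0 b0 = 0 := by
    have : e ⬝ᵥ p0.rep = k * (e ⬝ᵥ crossProduct a0 b0) := by
      rw [hk, dotProduct_smul, smul_eq_mul]
    rw [he'] at this
    exact (mul_eq_zero.1 this.symm).resolve_left hk0
  -- cross a0 e = c2 • cross a0 b0
  have hzero : crossProduct (crossProduct a0 b0) (crossProduct a0 e) = 0 := by
    rw [cross_cross_cross, hecr, zero_smul]
  obtain ⟨c2, hc2⟩ := cross_eq_zero_imp hab hzero
  have hc20 : c2 ≠ 0 := by rintro rfl; simp at hc2; exact hae hc2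
  have hsub : crossProduct a0 (e - c2 • b0) = 0 := by
    rw [map_sub, _root_.map_smul, hc2, sub_self]
  obtain ⟨x, hx⟩ := cross_eq_zero_imp ha0 hsub
  have hx0 : x ≠ 0 := by
    rintro rfl
    simp only [zero_smul] at hx
    have hebe : e = c2 • b0 := by
      have h' := hx
      rw [sub_eq_zero] at h'
      exact h'
    exact h23 (by rw [hLb, hLe, hebe, ← lineN_eq_of_smul hc20])
  refine ⟨x • a0, c2 • b0, smul_ne_zero hx0 ha0, smul_ne_zero hc20 hb0, ?_, ?_, ?_, ?_⟩
  · rw [show x • a0 + c2 • b0 = e by rw [← hx]; abel]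
    exact he0
  · rw [hLa]; exact lineN_eq_of_smul hx0
  · rw [hLb]; exact lineN_eq_of_smul hc20
  · rw [show x • a0 + c2 • b0 = e by rw [← hx]; abel]
    exact hLe

/-- Dual Pappus: two concurrent triples of lines, with the six cross intersection
points lying pairwise on three lines `Na, Nb, Nc`; then the latter are concurrent. -/
lemma pappus_geom {L1 L2 L3 M1 M2 M3 Na Nb Nc : Set ProjPlane}
    (hL1 : IsProjLine L1) (hL2 : IsProjLine L2) (hL3 : IsProjLine L3)
    (hM1 : IsProjLine M1) (hM2 : IsProjLine M2) (hM3 : IsProjLine M3)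
    (hNa : IsProjLine Na) (hNb : IsProjLine Nb) (hNc : IsProjLine Nc)
    (hL12 : L1 ≠ L2) (hL13 : L1 ≠ L3) (hL23 : L2 ≠ L3)
    (hM12 : M1 ≠ M2) (hM13 : M1 ≠ M3) (hM23 : M2 ≠ M3)
    (hL1M2 : L1 ≠ M2) (hL1M3 : L1 ≠ M3) (hL2M1 : L2 ≠ M1) (hL2M3 : L2 ≠ M3)
    (hL3M1 : L3 ≠ M1) (hL3M2 : L3 ≠ M2)
    {p0 : ProjPlane} (hp01 : p0 ∈ L1) (hp02 : p0 ∈ L2) (hp03 : p0 ∈ L3)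
    {p1 : ProjPlane} (hp11 : p1 ∈ M1) (hp12 : p1 ∈ M2) (hp13 : p1 ∈ M3)
    (h1 : ¬∃ z : ProjPlane, z ∈ L1 ∧ z ∈ L2 ∧ z ∈ M1)
    (h2 : ¬∃ z : ProjPlane, z ∈ L1 ∧ z ∈ L2 ∧ z ∈ M2)
    (h3 : ¬∃ z : ProjPlane, z ∈ L1 ∧ z ∈ M1 ∧ z ∈ M2)
    {w12 w21 w13 w31 w23 w32 : ProjPlane}
    (m12L : w12 ∈ L1) (m12M : w12 ∈ M2) (m12N : w12 ∈ Na)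
    (m21L : w21 ∈ L2) (m21M : w21 ∈ M1) (m21N : w21 ∈ Na)
    (m13L : w13 ∈ L1) (m13M : w13 ∈ M3) (m13N : w13 ∈ Nb)
    (m31L : w31 ∈ L3) (m31M : w31 ∈ M1) (m31N : w31 ∈ Nb)
    (m23L : w23 ∈ L2) (m23M : w23 ∈ M3) (m23N : w23 ∈ Nc)
    (m32L : w32 ∈ L3) (m32M : w32 ∈ M2) (m32N : w32 ∈ Nc)
    (hab : Na ≠ Nb) :
    ∃ q : ProjPlane, q ∈ Na ∧ q ∈ Nb ∧ q ∈ Nc := by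
  obtain ⟨a, b, ha, hb, hab', hLa, hLb, hLe⟩ :=
    concurrent_normalize hL1 hL2 hL3 hL12 hL13 hL23 hp01 hp02 hp03
  obtain ⟨c, d, hc, hd, hcd', hMc, hMd, hMg⟩ :=
    concurrent_normalize hM1 hM2 hM3 hM12 hM13 hM23 hp11 hp12 hp13
  -- basic independence facts
  have had : crossProduct a d ≠ 0 := normals_indep hL1 hM2 hL1M2 ha hd hLa hMd
  have hbc : crossProduct b c ≠ 0 := normals_indep hL2 hM1 hL2M1 hb hc hLb hMc
  have hag : crossProduct a (c + d) ≠ 0 := normals_indep hL1 hM3 hL1M3 ha hcd' hLa hMg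
  have hec : crossProduct (a + b) c ≠ 0 := normals_indep hL3 hM1 hL3M1 hab' hc hLe hMc
  have hbg : crossProduct b (c + d) ≠ 0 := normals_indep hL2 hM3 hL2M3 hb hcd' hLb hMg
  have hed : crossProduct (a + b) d ≠ 0 := normals_indep hL3 hM2 hL3M2 hab' hd hLe hMd
  -- representative vectors of the six points
  have hw12 : ∃ s : ℂ, s ≠ 0 ∧ w12.rep = s • crossProduct a d := by
    obtain ⟨s, hs⟩ := perp_perp had (by rw [hLa] at m12L; rwa [dotProduct_comm])
      (by rw [hMd] at m12M; rwa [dotProduct_comm])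
    exact ⟨s, by rintro rfl; simp at hs; exact w12.rep_nonzero hs, hs⟩
  have hw21 : ∃ s : ℂ, s ≠ 0 ∧ w21.rep = s • crossProduct b c := by
    obtain ⟨s, hs⟩ := perp_perp hbc (by rw [hLb] at m21L; rwa [dotProduct_comm])
      (by rw [hMc] at m21M; rwa [dotProduct_comm])
    exact ⟨s, by rintro rfl; simp at hs; exact w21.rep_nonzero hs, hs⟩
  have hw13 : ∃ s : ℂ, s ≠ 0 ∧ w13.rep = s • crossProduct a (c + d) := by
    obtain ⟨s, hs⟩ := perp_perp hag (by rw [hLa] at m13L; rwa [dotProduct_comm])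
      (by rw [hMg] at m13M; rwa [dotProduct_comm])
    exact ⟨s, by rintro rfl; simp at hs; exact w13.rep_nonzero hs, hs⟩
  have hw31 : ∃ s : ℂ, s ≠ 0 ∧ w31.rep = s • crossProduct (a + b) c := by
    obtain ⟨s, hs⟩ := perp_perp hec (by rw [hLe] at m31L; rwa [dotProduct_comm])
      (by rw [hMc] at m31M; rwa [dotProduct_comm])
    exact ⟨s, by rintro rfl; simp at hs; exact w31.rep_nonzero hs, hs⟩
  have hw23 : ∃ s : ℂ, s ≠ 0 ∧ w23.rep = s • crossProduct b (c + d) := by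
    obtain ⟨s, hs⟩ := perp_perp hbg (by rw [hLb] at m23L; rwa [dotProduct_comm])
      (by rw [hMg] at m23M; rwa [dotProduct_comm])
    exact ⟨s, by rintro rfl; simp at hs; exact w23.rep_nonzero hs, hs⟩
  have hw32 : ∃ s : ℂ, s ≠ 0 ∧ w32.rep = s • crossProduct (a + b) d := by
    obtain ⟨s, hs⟩ := perp_perp hed (by rw [hLe] at m32L; rwa [dotProduct_comm])
      (by rw [hMd] at m32M; rwa [dotProduct_comm])
    exact ⟨s, by rintro rfl; simp at hs; exact w32.rep_nonzero hs, hs⟩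
  obtain ⟨s12, hs12, hr12⟩ := hw12
  obtain ⟨s21, hs21, hr21⟩ := hw21
  obtain ⟨s13, hs13, hr13⟩ := hw13
  obtain ⟨s31, hs31, hr31⟩ := hw31
  obtain ⟨s23, hs23, hr23⟩ := hw23
  obtain ⟨s32, hs32, hr32⟩ := hw32
  -- the six points are pairwise distinct within each diagonal
  have hne12 : w12 ≠ w21 := by
    rintro rfl
    exact h1 ⟨w12, m12L, m21L, m21M⟩
  have hne13 : w13 ≠ w31 := by
    rintro rfl
    refine h1 ⟨w13, m13L, ?_, m31M⟩
    rw [hLb, mem_lineN]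
    have e1 : a ⬝ᵥ w13.rep = 0 := by rw [hLa] at m13L; exact m13L
    have e2 : (a + b) ⬝ᵥ w13.rep = 0 := by rw [hLe] at m31L; exact m31L
    rw [add_dotProduct] at e2
    linear_combination e2 - e1
  have hne23 : w23 ≠ w32 := by
    rintro rfl
    have e1 : b ⬝ᵥ w23.rep = 0 := by rw [hLb] at m23L; exact m23L
    have e2 : (a + b) ⬝ᵥ w23.rep = 0 := by rw [hLe] at m32L; exact m32L
    rw [add_dotProduct] at e2
    refine h2 ⟨w23, ?_, m23L, ?_⟩
    · rw [hLa, mem_lineN]; linear_combination e2 - e1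
    · exact m32M
  -- normal vectors of the three diagonal lines
  have hn1 : crossProduct (crossProduct a d) (crossProduct b c) ≠ 0 := by
    have h := rep_cross_ne_zero hne12
    rw [hr12, hr21, cross_smul_smul] at h
    intro h0
    rw [h0, smul_zero] at h
    exact h rfl
  have hn2 : crossProduct (crossProduct a (c + d)) (crossProduct (a + b) c) ≠ 0 := by
    have h := rep_cross_ne_zero hne13
    rw [hr13, hr31, cross_smul_smul] at h
    intro h0
    rw [h0, smul_zero] at h
    exact h rfl
  have hn3 : crossProduct (crossProduct b (c + d)) (crossProduct (a + b) d) ≠ 0 := by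
    have h := rep_cross_ne_zero hne23
    rw [hr23, hr32, cross_smul_smul] at h
    intro h0
    rw [h0, smul_zero] at h
    exact h rfl
  -- identify the diagonal lines
  have dotlem : ∀ X Y : V3, crossProduct X Y ⬝ᵥ X = 0 := by
    intro X Y
    rw [dotProduct_comm]
    exact dot_self_cross X Y
  have dotlem' : ∀ X Y : V3, crossProduct X Y ⬝ᵥ Y = 0 := by
    intro X Y
    rw [dotProduct_comm]
    exact dot_cross_self X Y
  have hNa' : Na = lineN (crossProduct (crossProduct a d) (crossProduct b c)) := by
    refine line_eq_of_two_points hNa (isProjLine_lineN hn1) hne12 m12N m21N ?_ ?_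
    · rw [mem_lineN, hr12, dotProduct_smul, dotlem, smul_zero]
    · rw [mem_lineN, hr21, dotProduct_smul, dotlem', smul_zero]
  have hNb' : Nb = lineN (crossProduct (crossProduct a (c + d)) (crossProduct (a + b) c)) := by
    refine line_eq_of_two_points hNb (isProjLine_lineN hn2) hne13 m13N m31N ?_ ?_
    · rw [mem_lineN, hr13, dotProduct_smul, dotlem, smul_zero]
    · rw [mem_lineN, hr31, dotProduct_smul, dotlem', smul_zero]
  have hNc' : Nc = lineN (crossProduct (crossProduct b (c + d)) (crossProduct (a + b) d)) := by
    refine line_eq_of_two_points hNc (isProjLine_lineN hn3) hne23 m23N m32N ?_ ?_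
    · rw [mem_lineN, hr23, dotProduct_smul, dotlem, smul_zero]
    · rw [mem_lineN, hr32, dotProduct_smul, dotlem', smul_zero]
  -- nondegeneracy scalars
  have hcdM : crossProduct c d ≠ 0 := normals_indep hM1 hM2 hM12 hc hd hMc hMd
  have hB : a ⬝ᵥ crossProduct c d ≠ 0 := by
    intro h0
    refine h3 ⟨Projectivization.mk ℂ (crossProduct c d) hcdM, ?_, ?_, ?_⟩
    · rw [hLa, mem_lineN_mk]; exact h0
    · rw [hMc, mem_lineN_mk]; exact dot_self_cross c d
    · rw [hMd, mem_lineN_mk]; exact dot_cross_self c d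
  have hD : a ⬝ᵥ crossProduct b c ≠ 0 := by
    intro h0
    refine h1 ⟨Projectivization.mk ℂ (crossProduct b c) hbc, ?_, ?_, ?_⟩
    · rw [hLa, mem_lineN_mk]; exact h0
    · rw [hLb, mem_lineN_mk]; exact dot_self_cross b c
    · rw [hMc, mem_lineN_mk]; exact dot_cross_self b c
  -- construct the common point
  obtain ⟨q, hqa, hqb⟩ := exists_point_on_two hNa hNb hab
  refine ⟨q, hqa, hqb, ?_⟩
  rw [hNa', mem_lineN] at hqa
  rw [hNb', mem_lineN] at hqb
  rw [hNc', mem_lineN]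
  exact pappus_dot a b c d q.rep hB hD hqa hqb

lemma perm_comm_aux : ∀ x y : Equiv.Perm (Fin 4), (∀ j, x j ≠ j) → (∀ j, y j ≠ j) →
    (∀ j, x j ≠ y j) → ∀ j, x (y j) = y (x j) := by decide

lemma latin_sigma (r1 r2 r3 : Equiv.Perm (Fin 4))
    (h12 : ∀ j, r1 j ≠ r2 j) (h13 : ∀ j, r1 j ≠ r3 j) (h23 : ∀ j, r2 j ≠ r3 j)
    (sbar : Fin 4) :
    ∃ j1 j2 j3 : Fin 4, j1 ≠ j2 ∧ j1 ≠ j3 ∧ j2 ≠ j3 ∧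
      j1 ≠ sbar ∧ j2 ≠ sbar ∧ j3 ≠ sbar ∧
      r1 j2 = r2 j1 ∧ r1 j3 = r3 j1 ∧ r2 j3 = r3 j2 := by
  set x : Equiv.Perm (Fin 4) := r2.trans r1.symm with hxdef
  set y : Equiv.Perm (Fin 4) := r3.trans r1.symm with hydef
  have hxapp : ∀ j, x j = r1.symm (r2 j) := fun j => rfl
  have hyapp : ∀ j, y j = r1.symm (r3 j) := fun j => rfl
  have e2 : ∀ j, r2 j = r1 (x j) := by
    intro j
    rw [hxapp, r1.apply_symm_apply]
  have e3 : ∀ j, r3 j = r1 (y j) := by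
    intro j
    rw [hyapp, r1.apply_symm_apply]
  have hx : ∀ j, x j ≠ j := by
    intro j h
    apply h12 j
    rw [e2, h]
  have hy : ∀ j, y j ≠ j := by
    intro j h
    apply h13 j
    rw [e3, h]
  have hxy : ∀ j, x j ≠ y j := by
    intro j h
    exact h23 j (by
      have := congrArg r1 h
      rwa [hxapp, hyapp, r1.apply_symm_apply, r1.apply_symm_apply] at this)
  have hcomm := perm_comm_aux x y hx hy hxy
  -- find an allowed starting column
  have : ∃ j1 : Fin 4, j1 ∉ ({sbar, x.symm sbar, y.symm sbar} : Finset (Fin 4)) := by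
    by_contra hcon
    push_neg at hcon
    have huniv : (Finset.univ : Finset (Fin 4)) ⊆ {sbar, x.symm sbar, y.symm sbar} :=
      fun j _ => hcon j
    have h4 : (4 : ℕ) ≤ ({sbar, x.symm sbar, y.symm sbar} : Finset (Fin 4)).card := by
      calc (4 : ℕ) = (Finset.univ : Finset (Fin 4)).card := by simp
        _ ≤ _ := Finset.card_le_card huniv
    have h3 : ({sbar, x.symm sbar, y.symm sbar} : Finset (Fin 4)).card ≤ 3 := by
      apply le_trans (Finset.card_insert_le _ _)
      have := Finset.card_insert_le (x.symm sbar) ({y.symm sbar} : Finset (Fin 4))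
      simp at this ⊢
      omega
    omega
  obtain ⟨j1, hj1⟩ := this
  simp only [Finset.mem_insert, Finset.mem_singleton, not_or] at hj1
  obtain ⟨hj1s, hj1x, hj1y⟩ := hj1
  refine ⟨j1, x j1, y j1, fun h => hx j1 h.symm, fun h => hy j1 h.symm, hxy j1, hj1s,
    ?_, ?_, ?_, ?_, ?_⟩
  · intro h
    exact hj1x (by rw [← h, Equiv.symm_apply_apply])
  · intro h
    exact hj1y (by rw [← h, Equiv.symm_apply_apply])
  · rw [hxapp, r1.apply_symm_apply]
  · rw [hyapp, r1.apply_symm_apply]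
  · rw [e2, e3, hcomm]

section Net

variable {A : Finset (Set ProjPlane)} {C : Fin 3 → Finset (Set ProjPlane)}

lemma lineOfClass (hA : IsNet 3 4 A C) {i : Fin 3} {L : Set ProjPlane} (hL : L ∈ C i) :
    IsProjLine L := hA.1 L (hA.2.2.2.2.1 i hL)

lemma class_ne (hA : IsNet 3 4 A C) {i j : Fin 3} (hij : i ≠ j) {L K : Set ProjPlane}
    (hL : L ∈ C i) (hK : K ∈ C j) : L ≠ K := by
  intro h
  exact Finset.disjoint_left.1 (hA.2.2.2.1 i j hij) hL (h ▸ hK)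

lemma interPt_mem_net (hA : IsNet 3 4 A C) {i j : Fin 3} (hij : i ≠ j)
    {L K : Set ProjPlane} (hL : L ∈ C i) (hK : K ∈ C j) :
    interPt L K ∈ L ∧ interPt L K ∈ K :=
  interPt_mem (lineOfClass hA hL) (lineOfClass hA hK) (class_ne hA hij hL hK)

/-- the unique line of class `m` through the intersection point of `L` and `K`. -/
noncomputable def netThird (hA : IsNet 3 4 A C) {i j : Fin 3} (hij : i ≠ j)
    {L K : Set ProjPlane} (hL : L ∈ C i) (hK : K ∈ C j) (m : Fin 3) : Set ProjPlane :=
  (hA.2.2.2.2.2.2 i j hij L hL K hK (interPt L K) (interPt_mem_net hA hij hL hK).1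
    (interPt_mem_net hA hij hL hK).2 m).choose

lemma netThird_spec (hA : IsNet 3 4 A C) {i j : Fin 3} (hij : i ≠ j)
    {L K : Set ProjPlane} (hL : L ∈ C i) (hK : K ∈ C j) (m : Fin 3) :
    (netThird hA hij hL hK m ∈ C m ∧ interPt L K ∈ netThird hA hij hL hK m) ∧
      ∀ N : Set ProjPlane, N ∈ C m → interPt L K ∈ N → N = netThird hA hij hL hK m := by
  have h := (hA.2.2.2.2.2.2 i j hij L hL K hK (interPt L K) (interPt_mem_net hA hij hL hK).1
    (interPt_mem_net hA hij hL hK).2 m).choose_spec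
  exact ⟨h.1, fun N hN hpN => h.2 N ⟨hN, hpN⟩⟩

/-- uniqueness of the class-`m` line through a mixed point. -/
lemma net_unique (hA : IsNet 3 4 A C) {i j : Fin 3} (hij : i ≠ j)
    {L K : Set ProjPlane} (hL : L ∈ C i) (hK : K ∈ C j) {p : ProjPlane}
    (hpL : p ∈ L) (hpK : p ∈ K) (m : Fin 3) {N N' : Set ProjPlane}
    (hN : N ∈ C m) (hN' : N' ∈ C m) (hpN : p ∈ N) (hpN' : p ∈ N') : N = N' := by
  obtain ⟨Z, hZ⟩ := hA.2.2.2.2.2.2 i j hij L hL K hK p hpL hpK m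
  rw [hZ.2 N ⟨hN, hpN⟩, hZ.2 N' ⟨hN', hpN'⟩]

/-- closure: if `p` lies on two distinct lines of class `i` then every line of the
arrangement through `p` belongs to class `i`. -/
lemma class_closure (hA : IsNet 3 4 A C) {i : Fin 3} {L K : Set ProjPlane}
    (hL : L ∈ C i) (hK : K ∈ C i) (hLK : L ≠ K) {p : ProjPlane}
    (hpL : p ∈ L) (hpK : p ∈ K) : ∀ K' ∈ A, p ∈ K' → K' ∈ C i := by
  intro K' hK' hpK'
  obtain ⟨j, hj⟩ := hA.2.2.2.2.2.1 K' hK'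
  by_cases hij : j = i
  · exact hij ▸ hj
  · exact absurd (net_unique hA hij hj hL hpK' hpL i hL hK hpL hpK) hLK

lemma netThird_inj (hA : IsNet 3 4 A C) {i j k : Fin 3} (hij : i ≠ j) (hik : i ≠ k)
    {L M M' : Set ProjPlane} (hL : L ∈ C i) (hM : M ∈ C j) (hM' : M' ∈ C j)
    (heq : netThird hA hij hL hM k = netThird hA hij hL hM' k) : M = M' := by
  obtain ⟨⟨hNk, hpN⟩, -⟩ := netThird_spec hA hij hL hM k
  obtain ⟨⟨-, hpN'⟩, -⟩ := netThird_spec hA hij hL hM' k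
  rw [← heq] at hpN'
  have hpL := (interPt_mem_net hA hij hL hM).1
  have hpM := (interPt_mem_net hA hij hL hM).2
  have hpL' := (interPt_mem_net hA hij hL hM').1
  have hpM' := (interPt_mem_net hA hij hL hM').2
  by_cases hpp : interPt L M = interPt L M'
  · exact net_unique hA hij hL hM hpL hpM j hM hM' hpM (hpp ▸ hpM')
  · exact absurd (line_eq_of_two_points (lineOfClass hA hL) (lineOfClass hA hNk) hpp
      hpL hpL' hpN hpN') (class_ne hA hik hL hNk)

lemma netThird_discord (hA : IsNet 3 4 A C) {i j k : Fin 3} (hij : i ≠ j) (hjk : j ≠ k)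
    {L L' M : Set ProjPlane} (hL : L ∈ C i) (hL' : L' ∈ C i) (hLL' : L ≠ L')
    (hM : M ∈ C j) :
    netThird hA hij hL hM k ≠ netThird hA hij hL' hM k := by
  intro heq
  obtain ⟨⟨hNk, hpN⟩, -⟩ := netThird_spec hA hij hL hM k
  obtain ⟨⟨-, hpN'⟩, -⟩ := netThird_spec hA hij hL' hM k
  rw [← heq] at hpN'
  have hpL := (interPt_mem_net hA hij hL hM).1
  have hpM := (interPt_mem_net hA hij hL hM).2
  have hpL' := (interPt_mem_net hA hij hL' hM).1
  have hpM' := (interPt_mem_net hA hij hL' hM).2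
  by_cases hpp : interPt L M = interPt L' M
  · exact hLL' (net_unique hA hij hL hM hpL hpM i hL hL' hpL (hpp ▸ hpL'))
  · exact absurd (line_eq_of_two_points (lineOfClass hA hM) (lineOfClass hA hNk) hpp
      hpM hpM' hpN hpN') (class_ne hA hjk hM hNk)

lemma no_mixed_concurrence (hA : IsNet 3 4 A C) {i j : Fin 3} (hij : i ≠ j)
    {L L' M : Set ProjPlane} (hL : L ∈ C i) (hL' : L' ∈ C i) (hLL' : L ≠ L')
    (hM : M ∈ C j) : ¬∃ z : ProjPlane, z ∈ L ∧ z ∈ L' ∧ z ∈ M := by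
  rintro ⟨z, hz1, hz2, hz3⟩
  have hMi := class_closure hA hL hL' hLL' hz1 hz2 M (hA.2.2.2.2.1 j hM) hz3
  exact class_ne hA hij hMi hM rfl

noncomputable def rowPerm (hA : IsNet 3 4 A C) {i j k : Fin 3} (hij : i ≠ j) (hik : i ≠ k)
    {L : Set ProjPlane} (hL : L ∈ C i)
    (eJ : {M // M ∈ C j} ≃ Fin 4) (eK : {N // N ∈ C k} ≃ Fin 4) : Equiv.Perm (Fin 4) :=
  Equiv.ofBijective (fun t => eK ⟨netThird hA hij hL (eJ.symm t).2 k,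
      (netThird_spec hA hij hL (eJ.symm t).2 k).1.1⟩)
    (Finite.injective_iff_bijective.1 (fun t t' h => by
        have hval : netThird hA hij hL (eJ.symm t).2 k =
            netThird hA hij hL (eJ.symm t').2 k := congrArg Subtype.val (eK.injective h)
        exact eJ.symm.injective (Subtype.ext
          (netThird_inj hA hij hik hL (eJ.symm t).2 (eJ.symm t').2 hval))))

lemma rowPerm_apply (hA : IsNet 3 4 A C) {i j k : Fin 3} (hij : i ≠ j) (hik : i ≠ k)
    {L : Set ProjPlane} (hL : L ∈ C i)
    (eJ : {M // M ∈ C j} ≃ Fin 4) (eK : {N // N ∈ C k} ≃ Fin 4) (t : Fin 4) :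
    rowPerm hA hij hik hL eJ eK t = eK ⟨netThird hA hij hL (eJ.symm t).2 k,
      (netThird_spec hA hij hL (eJ.symm t).2 k).1.1⟩ := rfl

/-- the key step: if two classes contain concurrent triples, so does the third. -/
lemma two_triples (hA : IsNet 3 4 A C) {i j k : Fin 3} (hij : i ≠ j) (hik : i ≠ k)
    (hjk : j ≠ k) (hi : HasConcurrentTriple (C i)) (hj : HasConcurrentTriple (C j)) :
    HasConcurrentTriple (C k) := by
  obtain ⟨L1, hL1, L2, hL2, L3, hL3, hL12, hL13, hL23, P0, hP01, hP02, hP03⟩ := hi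
  obtain ⟨M1, hM1, M2, hM2, M3, hM3, hM12, hM13, hM23, P1, hP11, hP12, hP13⟩ := hj
  -- enumerations of the classes j and k
  set eJ : {M // M ∈ C j} ≃ Fin 4 := (C j).equivFin.trans (finCongr (hA.2.2.1 j)) with heJ
  set eK : {N // N ∈ C k} ≃ Fin 4 := (C k).equivFin.trans (finCongr (hA.2.2.1 k)) with heK
  -- the fourth line of class j
  have hsubM : ({M1, M2, M3} : Finset (Set ProjPlane)) ⊆ C j := by
    intro x hx
    simp only [Finset.mem_insert, Finset.mem_singleton] at hx
    rcases hx with rfl | rfl | rfl <;> assumption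
  have hcard3 : ({M1, M2, M3} : Finset (Set ProjPlane)).card = 3 := by
    rw [Finset.card_insert_of_notMem (by simp [hM12, hM13]),
      Finset.card_insert_of_notMem (by simp [hM23]), Finset.card_singleton]
  have hdiffcard : ((C j) \ {M1, M2, M3}).card = 1 := by
    rw [Finset.card_sdiff_of_subset hsubM, hcard3, hA.2.2.1 j]
  obtain ⟨M4, hM4⟩ := Finset.card_eq_one.1 hdiffcard
  have hM4mem : M4 ∈ C j := by
    have : M4 ∈ (C j) \ {M1, M2, M3} := by rw [hM4]; exact Finset.mem_singleton_self _
    exact (Finset.mem_sdiff.1 this).1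
  have hM4rest : ∀ x ∈ C j, x ≠ M1 → x ≠ M2 → x ≠ M3 → x = M4 := by
    intro x hx h1 h2 h3
    have : x ∈ (C j) \ {M1, M2, M3} := by
      rw [Finset.mem_sdiff]
      exact ⟨hx, by simp [h1, h2, h3]⟩
    rw [hM4] at this
    exact Finset.mem_singleton.1 this
  -- pairwise discordance of the three row permutations
  have discord : ∀ (L L' : Set ProjPlane) (hL : L ∈ C i) (hL' : L' ∈ C i), L ≠ L' →
      ∀ t, rowPerm hA hij hik hL eJ eK t ≠ rowPerm hA hij hik hL' eJ eK t := by
    intro L L' hL hL' hne t h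
    rw [rowPerm_apply, rowPerm_apply] at h
    exact netThird_discord hA hij hjk hL hL' hne (eJ.symm t).2
      (congrArg Subtype.val (eK.injective h))
  obtain ⟨j1, j2, j3, hj12, hj13, hj23, hj1s, hj2s, hj3s, hs1, hs2, hs3⟩ :=
    latin_sigma (rowPerm hA hij hik hL1 eJ eK) (rowPerm hA hij hik hL2 eJ eK)
      (rowPerm hA hij hik hL3 eJ eK) (discord L1 L2 hL1 hL2 hL12)
      (discord L1 L3 hL1 hL3 hL13) (discord L2 L3 hL2 hL3 hL23) (eJ ⟨M4, hM4mem⟩)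
  -- the three relevant lines of class j pass through P1
  have hthru : ∀ t : Fin 4, t ≠ eJ ⟨M4, hM4mem⟩ →
      P1 ∈ ((eJ.symm t : {M // M ∈ C j}) : Set ProjPlane) := by
    intro t ht
    by_cases h1 : ((eJ.symm t : {M // M ∈ C j}) : Set ProjPlane) = M1
    · rw [h1]; exact hP11
    by_cases h2 : ((eJ.symm t : {M // M ∈ C j}) : Set ProjPlane) = M2
    · rw [h2]; exact hP12
    by_cases h3 : ((eJ.symm t : {M // M ∈ C j}) : Set ProjPlane) = M3
    · rw [h3]; exact hP13
    exfalso
    apply ht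
    have h4 := hM4rest _ (eJ.symm t).2 h1 h2 h3
    calc t = eJ (eJ.symm t) := (eJ.apply_symm_apply t).symm
      _ = eJ ⟨M4, hM4mem⟩ := congrArg eJ (Subtype.ext h4)
  -- names for the three columns
  have hMAB : ((eJ.symm j1 : {M // M ∈ C j}) : Set ProjPlane) ≠ (eJ.symm j2 :) := by
    intro h
    exact hj12 (eJ.symm.injective (Subtype.ext h))
  have hMAC : ((eJ.symm j1 : {M // M ∈ C j}) : Set ProjPlane) ≠ (eJ.symm j3 :) := by
    intro h
    exact hj13 (eJ.symm.injective (Subtype.ext h))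
  have hMBC : ((eJ.symm j2 : {M // M ∈ C j}) : Set ProjPlane) ≠ (eJ.symm j3 :) := by
    intro h
    exact hj23 (eJ.symm.injective (Subtype.ext h))
  -- the three diagonal lines of class k
  rw [rowPerm_apply, rowPerm_apply] at hs1 hs2 hs3
  have hNa2 : netThird hA hij hL2 (eJ.symm j1).2 k = netThird hA hij hL1 (eJ.symm j2).2 k :=
    (congrArg Subtype.val (eK.injective hs1)).symm
  have hNb3 : netThird hA hij hL3 (eJ.symm j1).2 k = netThird hA hij hL1 (eJ.symm j3).2 k :=
    (congrArg Subtype.val (eK.injective hs2)).symm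
  have hNc3 : netThird hA hij hL3 (eJ.symm j2).2 k = netThird hA hij hL2 (eJ.symm j3).2 k :=
    (congrArg Subtype.val (eK.injective hs3)).symm
  set Na := netThird hA hij hL1 (eJ.symm j2).2 k with hNadef
  set Nb := netThird hA hij hL1 (eJ.symm j3).2 k with hNbdef
  set Nc := netThird hA hij hL2 (eJ.symm j3).2 k with hNcdef
  have hNaK : Na ∈ C k := (netThird_spec hA hij hL1 (eJ.symm j2).2 k).1.1
  have hNbK : Nb ∈ C k := (netThird_spec hA hij hL1 (eJ.symm j3).2 k).1.1
  have hNcK : Nc ∈ C k := (netThird_spec hA hij hL2 (eJ.symm j3).2 k).1.1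
  have hNab : Na ≠ Nb := by
    intro h
    apply hj23
    apply (rowPerm hA hij hik hL1 eJ eK).injective
    rw [rowPerm_apply, rowPerm_apply]
    exact congrArg eK (Subtype.ext h)
  have hNac : Na ≠ Nc := by
    intro h
    apply hj13
    apply (rowPerm hA hij hik hL2 eJ eK).injective
    rw [rowPerm_apply, rowPerm_apply]
    exact congrArg eK (Subtype.ext (hNa2.trans h))
  have hNbc : Nb ≠ Nc := by
    intro h
    apply hj12
    apply (rowPerm hA hij hik hL3 eJ eK).injective
    rw [rowPerm_apply, rowPerm_apply]
    exact congrArg eK (Subtype.ext (hNb3.trans (h.trans hNc3.symm)))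
  -- apply Pappus
  have hji : j ≠ i := Ne.symm hij
  obtain ⟨q, hqa, hqb, hqc⟩ := pappus_geom
    (lineOfClass hA hL1) (lineOfClass hA hL2) (lineOfClass hA hL3)
    (lineOfClass hA (eJ.symm j1).2) (lineOfClass hA (eJ.symm j2).2)
    (lineOfClass hA (eJ.symm j3).2)
    (lineOfClass hA hNaK) (lineOfClass hA hNbK) (lineOfClass hA hNcK)
    hL12 hL13 hL23 hMAB hMAC hMBC
    (class_ne hA hij hL1 (eJ.symm j2).2) (class_ne hA hij hL1 (eJ.symm j3).2)
    (class_ne hA hij hL2 (eJ.symm j1).2) (class_ne hA hij hL2 (eJ.symm j3).2)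
    (class_ne hA hij hL3 (eJ.symm j1).2) (class_ne hA hij hL3 (eJ.symm j2).2)
    hP01 hP02 hP03 (hthru j1 hj1s) (hthru j2 hj2s) (hthru j3 hj3s)
    (no_mixed_concurrence hA hij hL1 hL2 hL12 (eJ.symm j1).2)
    (no_mixed_concurrence hA hij hL1 hL2 hL12 (eJ.symm j2).2)
    (by
      intro ⟨z, hz1, hz2, hz3⟩
      exact no_mixed_concurrence hA hji (eJ.symm j1).2 (eJ.symm j2).2 hMAB hL1 ⟨z, hz2, hz3, hz1⟩)
    (interPt_mem_net hA hij hL1 (eJ.symm j2).2).1 (interPt_mem_net hA hij hL1 (eJ.symm j2).2).2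
    (netThird_spec hA hij hL1 (eJ.symm j2).2 k).1.2
    (interPt_mem_net hA hij hL2 (eJ.symm j1).2).1 (interPt_mem_net hA hij hL2 (eJ.symm j1).2).2
    (by rw [← hNa2]; exact (netThird_spec hA hij hL2 (eJ.symm j1).2 k).1.2)
    (interPt_mem_net hA hij hL1 (eJ.symm j3).2).1 (interPt_mem_net hA hij hL1 (eJ.symm j3).2).2
    (netThird_spec hA hij hL1 (eJ.symm j3).2 k).1.2
    (interPt_mem_net hA hij hL3 (eJ.symm j1).2).1 (interPt_mem_net hA hij hL3 (eJ.symm j1).2).2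
    (by rw [← hNb3]; exact (netThird_spec hA hij hL3 (eJ.symm j1).2 k).1.2)
    (interPt_mem_net hA hij hL2 (eJ.symm j3).2).1 (interPt_mem_net hA hij hL2 (eJ.symm j3).2).2
    (netThird_spec hA hij hL2 (eJ.symm j3).2 k).1.2
    (interPt_mem_net hA hij hL3 (eJ.symm j2).2).1 (interPt_mem_net hA hij hL3 (eJ.symm j2).2).2
    (by rw [← hNc3]; exact (netThird_spec hA hij hL3 (eJ.symm j2).2 k).1.2)
    hNab
  exact ⟨Na, hNaK, Nb, hNbK, Nc, hNcK, hNab, hNac, hNbc, q, hqa, hqb, hqc⟩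

end Net

end S7

namespace S7

variable {A : Finset (Set ProjPlane)} {C : Fin 3 → Finset (Set ProjPlane)}

lemma mult_of_mixed (hA : IsNet 3 4 A C)
    (hm : ∀ p : ProjPlane, IsMultPoint A p → mult A p = 2 ∨ mult A p = 3)
    {i j : Fin 3} (hij : i ≠ j) {L K : Set ProjPlane} (hL : L ∈ C i) (hK : K ∈ C j)
    {p : ProjPlane} (hpL : p ∈ L) (hpK : p ∈ K) : mult A p = 3 := by
  have hex : ∀ m : Fin 3, ∃ N, N ∈ C m ∧ p ∈ N := by
    intro m
    obtain ⟨N, hN, -⟩ := hA.2.2.2.2.2.2 i j hij L hL K hK p hpL hpK m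
    exact ⟨N, hN⟩
  obtain ⟨N0, hN0, hpN0⟩ := hex 0
  obtain ⟨N1, hN1, hpN1⟩ := hex 1
  obtain ⟨N2, hN2, hpN2⟩ := hex 2
  have h01 : N0 ≠ N1 := class_ne hA (by decide) hN0 hN1
  have h02 : N0 ≠ N2 := class_ne hA (by decide) hN0 hN2
  have h12 : N1 ≠ N2 := class_ne hA (by decide) hN1 hN2
  have hsub : ({N0, N1, N2} : Finset (Set ProjPlane)) ⊆ linesThrough A p := by
    intro x hx
    simp only [Finset.mem_insert, Finset.mem_singleton] at hx
    rw [linesThrough, Finset.mem_filter]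
    rcases hx with rfl | rfl | rfl
    · exact ⟨hA.2.2.2.2.1 0 hN0, hpN0⟩
    · exact ⟨hA.2.2.2.2.1 1 hN1, hpN1⟩
    · exact ⟨hA.2.2.2.2.1 2 hN2, hpN2⟩
  have hcard : ({N0, N1, N2} : Finset (Set ProjPlane)).card = 3 := by
    rw [Finset.card_insert_of_notMem (by simp [h01, h02]),
      Finset.card_insert_of_notMem (by simp [h12]), Finset.card_singleton]
  have h3 : 3 ≤ mult A p := by
    rw [mult, ← hcard]
    exact Finset.card_le_card hsub
  rcases hm p (by rw [IsMultPoint]; omega) with h | h <;> omega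

lemma exists_line_class (hA : IsNet 3 4 A C) {i j : Fin 3} (hij : i ≠ j)
    {L K : Set ProjPlane} (hL : L ∈ C i) (hK : K ∈ C j)
    {p : ProjPlane} (hpL : p ∈ L) (hpK : p ∈ K) (m : Fin 3) :
    ∃ N, N ∈ C m ∧ p ∈ N := by
  obtain ⟨N, hN, -⟩ := hA.2.2.2.2.2.2 i j hij L hL K hK p hpL hpK m
  exact ⟨N, hN⟩

lemma within_filter_eq (hA : IsNet 3 4 A C)
    (hm : ∀ p : ProjPlane, IsMultPoint A p → mult A p = 2 ∨ mult A p = 3)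
    {i : Fin 3} {p : ProjPlane} (h3 : 3 ≤ (linesThrough (C i) p).card) :
    linesThrough A p = linesThrough (C i) p ∧ (linesThrough (C i) p).card = 3 ∧
      mult A p = 3 := by
  obtain ⟨L, hL, K, hK, hLK⟩ := Finset.one_lt_card.1 (by omega : 1 < (linesThrough (C i) p).card)
  rw [linesThrough, Finset.mem_filter] at hL hK
  have heq : linesThrough A p = linesThrough (C i) p := by
    apply Finset.Subset.antisymm
    · intro K' hK'
      rw [linesThrough, Finset.mem_filter] at hK' ⊢
      exact ⟨class_closure hA hL.1 hK.1 hLK hL.2 hK.2 K' hK'.1 hK'.2, hK'.2⟩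
    · exact Finset.filter_subset_filter _ (hA.2.2.2.2.1 i)
  have hmp : mult A p = 3 := by
    have hge : 3 ≤ mult A p := by rw [mult, heq]; exact h3
    rcases hm p (by rw [IsMultPoint]; omega) with h | h <;> omega
  refine ⟨heq, ?_, hmp⟩
  rw [← heq]
  exact hmp

/-- the set of triple points inside class `i` -/
def TG (C : Fin 3 → Finset (Set ProjPlane)) (i : Fin 3) : Set ProjPlane :=
  {p : ProjPlane | 3 ≤ (linesThrough (C i) p).card}

lemma TG_subsingleton (hA : IsNet 3 4 A C) (i : Fin 3) :
    ∀ p ∈ TG C i, ∀ q ∈ TG C i, p = q := by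
  intro p hp q hq
  by_contra hpq
  have hsubp : linesThrough (C i) p ⊆ C i := Finset.filter_subset _ _
  have hsubq : linesThrough (C i) q ⊆ C i := Finset.filter_subset _ _
  have hunion : (linesThrough (C i) p ∪ linesThrough (C i) q).card ≤ 4 := by
    rw [← hA.2.2.1 i]
    exact Finset.card_le_card (Finset.union_subset hsubp hsubq)
  have hint : 2 ≤ (linesThrough (C i) p ∩ linesThrough (C i) q).card := by
    have := Finset.card_inter_add_card_union (linesThrough (C i) p) (linesThrough (C i) q)
    have hp3 : 3 ≤ (linesThrough (C i) p).card := hp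
    have hq3 : 3 ≤ (linesThrough (C i) q).card := hq
    omega
  obtain ⟨L, hL, K, hK, hLK⟩ := Finset.one_lt_card.1 (by omega : 1 <
    (linesThrough (C i) p ∩ linesThrough (C i) q).card)
  rw [Finset.mem_inter, linesThrough, linesThrough, Finset.mem_filter, Finset.mem_filter] at hL hK
  exact hpq (point_eq_of_two_lines (lineOfClass hA hL.1.1) (lineOfClass hA hK.1.1) hLK
    hL.1.2 hK.1.2 hL.2.2 hK.2.2)

lemma hasTriple_iff_TG (hA : IsNet 3 4 A C) (i : Fin 3) :
    HasConcurrentTriple (C i) ↔ (TG C i).Nonempty := by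
  constructor
  · rintro ⟨L, hL, M, hM, N, hN, hLM, hLN, hMN, p, hpL, hpM, hpN⟩
    refine ⟨p, ?_⟩
    have hsub : ({L, M, N} : Finset (Set ProjPlane)) ⊆ linesThrough (C i) p := by
      intro x hx
      simp only [Finset.mem_insert, Finset.mem_singleton] at hx
      rw [linesThrough, Finset.mem_filter]
      rcases hx with rfl | rfl | rfl
      · exact ⟨hL, hpL⟩
      · exact ⟨hM, hpM⟩
      · exact ⟨hN, hpN⟩
    have hcard : ({L, M, N} : Finset (Set ProjPlane)).card = 3 := by
      rw [Finset.card_insert_of_notMem (by simp [hLM, hLN]),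
        Finset.card_insert_of_notMem (by simp [hMN]), Finset.card_singleton]
    show 3 ≤ _
    rw [← hcard]
    exact Finset.card_le_card hsub
  · rintro ⟨p, hp⟩
    obtain ⟨t, hts, htc⟩ := Finset.exists_subset_card_eq hp
    obtain ⟨L, M, N, hLM, hLN, hMN, rfl⟩ := Finset.card_eq_three.1 htc
    have hL := hts (by simp : L ∈ ({L, M, N} : Finset (Set ProjPlane)))
    have hM := hts (by simp : M ∈ ({L, M, N} : Finset (Set ProjPlane)))
    have hN := hts (by simp : N ∈ ({L, M, N} : Finset (Set ProjPlane)))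
    rw [linesThrough, Finset.mem_filter] at hL hM hN
    exact ⟨L, hL.1, M, hM.1, N, hN.1, hLM, hLN, hMN, p, hL.2, hM.2, hN.2⟩

/-- the 16 mixed triple points -/
def MP (C : Fin 3 → Finset (Set ProjPlane)) : Finset ProjPlane :=
  ((C 0) ×ˢ (C 1)).image fun LM => interPt LM.1 LM.2

lemma MP_card (hA : IsNet 3 4 A C) : (MP C).card = 16 := by
  rw [MP, Finset.card_image_of_injOn, Finset.card_product, hA.2.2.1 0, hA.2.2.1 1]
  intro x hx y hy hxy
  simp only [Finset.coe_product, Set.mem_prod, Finset.mem_coe] at hx hy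
  have h01 : (0 : Fin 3) ≠ 1 := by decide
  have hx1 := (interPt_mem_net hA h01 hx.1 hx.2).1
  have hx2 := (interPt_mem_net hA h01 hx.1 hx.2).2
  have hy1 := (interPt_mem_net hA h01 hy.1 hy.2).1
  have hy2 := (interPt_mem_net hA h01 hy.1 hy.2).2
  have hxy' : interPt x.1 x.2 = interPt y.1 y.2 := hxy
  rw [← hxy'] at hy1 hy2
  have hL : x.1 = y.1 := net_unique hA h01 hx.1 hx.2 hx1 hx2 0 hx.1 hy.1 hx1 hy1
  have hM : x.2 = y.2 := net_unique hA h01 hx.1 hx.2 hx1 hx2 1 hx.2 hy.2 hx2 hy2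
  exact Prod.ext hL hM

lemma MP_mult (hA : IsNet 3 4 A C)
    (hm : ∀ p : ProjPlane, IsMultPoint A p → mult A p = 2 ∨ mult A p = 3) :
    ∀ p ∈ MP C, mult A p = 3 := by
  intro p hp
  rw [MP, Finset.mem_image] at hp
  obtain ⟨LM, hLM, rfl⟩ := hp
  rw [Finset.mem_product] at hLM
  have h01 : (0 : Fin 3) ≠ 1 := by decide
  exact mult_of_mixed hA hm h01 hLM.1 hLM.2 (interPt_mem_net hA h01 hLM.1 hLM.2).1
    (interPt_mem_net hA h01 hLM.1 hLM.2).2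

lemma MP_not_TG (hA : IsNet 3 4 A C)
    (hm : ∀ p : ProjPlane, IsMultPoint A p → mult A p = 2 ∨ mult A p = 3)
    {p : ProjPlane} (hp : p ∈ MP C) (i : Fin 3) : p ∉ TG C i := by
  intro hTG
  obtain ⟨heq, -, -⟩ := within_filter_eq hA hm hTG
  rw [MP, Finset.mem_image] at hp
  obtain ⟨LM, hLM, hpd⟩ := hp
  rw [Finset.mem_product] at hLM
  have h01 : (0 : Fin 3) ≠ 1 := by decide
  have hmm := interPt_mem_net hA h01 hLM.1 hLM.2
  rw [hpd] at hmm
  have hL : LM.1 ∈ linesThrough (C i) p := by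
    rw [← heq, linesThrough, Finset.mem_filter]
    exact ⟨hA.2.2.2.2.1 0 hLM.1, hmm.1⟩
  have hM : LM.2 ∈ linesThrough (C i) p := by
    rw [← heq, linesThrough, Finset.mem_filter]
    exact ⟨hA.2.2.2.2.1 1 hLM.2, hmm.2⟩
  rw [linesThrough, Finset.mem_filter] at hL hM
  have hi0 : i = 0 := by
    by_contra h
    exact Finset.disjoint_left.1 (hA.2.2.2.1 i 0 h) hL.1 hLM.1
  have hi1 : i = 1 := by
    by_contra h
    exact Finset.disjoint_left.1 (hA.2.2.2.1 i 1 h) hM.1 hLM.2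
  rw [hi0] at hi1
  exact absurd hi1 (by decide)

lemma TG_disjoint (hA : IsNet 3 4 A C)
    (hm : ∀ p : ProjPlane, IsMultPoint A p → mult A p = 2 ∨ mult A p = 3)
    {i j : Fin 3} (hij : i ≠ j) {p : ProjPlane} (hpi : p ∈ TG C i) (hpj : p ∈ TG C j) :
    False := by
  obtain ⟨heqi, -, -⟩ := within_filter_eq hA hm hpi
  obtain ⟨heqj, -, -⟩ := within_filter_eq hA hm hpj
  have h3i : 3 ≤ (linesThrough (C i) p).card := hpi
  obtain ⟨L, hL⟩ := Finset.card_pos.1 (lt_of_lt_of_le (by norm_num) h3i)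
  have hLj : L ∈ linesThrough (C j) p := by rw [← heqj, heqi]; exact hL
  rw [linesThrough, Finset.mem_filter] at hL hLj
  exact Finset.disjoint_left.1 (hA.2.2.2.1 i j hij) hL.1 hLj.1

/-- classification of the triple points -/
lemma triple_eq (hA : IsNet 3 4 A C)
    (hm : ∀ p : ProjPlane, IsMultPoint A p → mult A p = 2 ∨ mult A p = 3) :
    {p : ProjPlane | mult A p = 3} = ↑(MP C) ∪ (TG C 0 ∪ TG C 1 ∪ TG C 2) := by
  apply Set.Subset.antisymm
  · intro p hp
    have hp3 : (linesThrough A p).card = 3 := hp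
    obtain ⟨L, M, N, hLM, hLN, hMN, hset⟩ := Finset.card_eq_three.1 hp3
    have hL : L ∈ linesThrough A p := by rw [hset]; simp
    have hM : M ∈ linesThrough A p := by rw [hset]; simp
    have hN : N ∈ linesThrough A p := by rw [hset]; simp
    rw [linesThrough, Finset.mem_filter] at hL hM hN
    obtain ⟨cL, hcL⟩ := hA.2.2.2.2.2.1 L hL.1
    obtain ⟨cM, hcM⟩ := hA.2.2.2.2.2.1 M hM.1
    obtain ⟨cN, hcN⟩ := hA.2.2.2.2.2.1 N hN.1
    -- helper: if two of the lines share a class, p is a within-class triple point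
    have within : ∀ (c : Fin 3) (X Y : Set ProjPlane), X ∈ C c → Y ∈ C c → X ≠ Y →
        p ∈ X → p ∈ Y → p ∈ TG C 0 ∪ TG C 1 ∪ TG C 2 := by
      intro c X Y hX hY hXY hpX hpY
      have hsub : linesThrough A p ⊆ linesThrough (C c) p := by
        intro z hz
        rw [linesThrough, Finset.mem_filter] at hz ⊢
        exact ⟨class_closure hA hX hY hXY hpX hpY z hz.1 hz.2, hz.2⟩
      have h3 : p ∈ TG C c := by
        show 3 ≤ _
        rw [← hp3]
        exact Finset.card_le_card hsub
      fin_cases c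
      · exact Or.inl (Or.inl h3)
      · exact Or.inl (Or.inr h3)
      · exact Or.inr h3
    by_cases hc1 : cL = cM
    · exact Or.inr (within cL L M hcL (hc1 ▸ hcM) hLM hL.2 hM.2)
    by_cases hc2 : cL = cN
    · exact Or.inr (within cL L N hcL (hc2 ▸ hcN) hLN hL.2 hN.2)
    by_cases hc3 : cM = cN
    · exact Or.inr (within cM M N hcM (hc3 ▸ hcN) hMN hM.2 hN.2)
    -- all classes distinct: p is a mixed point
    left
    have huniv : ({cL, cM, cN} : Finset (Fin 3)) = Finset.univ := by
      apply Finset.eq_univ_of_card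
      rw [Finset.card_insert_of_notMem (by simp [hc1, hc2]),
        Finset.card_insert_of_notMem (by simp [hc3]), Finset.card_singleton]
      rfl
    have hget : ∀ m : Fin 3, ∃ X, X ∈ C m ∧ p ∈ X := by
      intro m
      have : m ∈ ({cL, cM, cN} : Finset (Fin 3)) := by rw [huniv]; simp
      simp only [Finset.mem_insert, Finset.mem_singleton] at this
      rcases this with rfl | rfl | rfl
      · exact ⟨L, hcL, hL.2⟩
      · exact ⟨M, hcM, hM.2⟩
      · exact ⟨N, hcN, hN.2⟩
    obtain ⟨X, hX, hpX⟩ := hget 0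
    obtain ⟨Y, hY, hpY⟩ := hget 1
    have h01 : (0 : Fin 3) ≠ 1 := by decide
    have hmem := interPt_mem_net hA h01 hX hY
    have hpXY : p = interPt X Y :=
      point_eq_of_two_lines (lineOfClass hA hX) (lineOfClass hA hY)
        (class_ne hA h01 hX hY) hpX hpY hmem.1 hmem.2
    rw [MP, Finset.mem_coe, Finset.mem_image]
    exact ⟨(X, Y), Finset.mem_product.2 ⟨hX, hY⟩, hpXY.symm⟩
  · intro p hp
    rcases hp with hp | hp
    · exact MP_mult hA hm p hp
    · have : ∃ i, p ∈ TG C i := by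
        rcases hp with (h | h) | h
        exacts [⟨0, h⟩, ⟨1, h⟩, ⟨2, h⟩]
      obtain ⟨i, hi⟩ := this
      exact (within_filter_eq hA hm hi).2.2

/-- the master counting lemma -/
lemma triple_ncard (hA : IsNet 3 4 A C)
    (hm : ∀ p : ProjPlane, IsMultPoint A p → mult A p = 2 ∨ mult A p = 3)
    (W : Finset ProjPlane)
    (hW : (TG C 0 ∪ TG C 1 ∪ TG C 2 : Set ProjPlane) = ↑W) :
    {p : ProjPlane | mult A p = 3}.ncard = 16 + W.card := by
  have hdisj : Disjoint (MP C) W := by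
    rw [Finset.disjoint_left]
    intro a ha haW
    have : a ∈ (TG C 0 ∪ TG C 1 ∪ TG C 2 : Set ProjPlane) := by
      rw [hW]; exact haW
    rcases this with (h | h) | h
    · exact MP_not_TG hA hm ha 0 h
    · exact MP_not_TG hA hm ha 1 h
    · exact MP_not_TG hA hm ha 2 h
  rw [triple_eq hA hm, hW, ← Finset.coe_union, Set.ncard_coe_finset,
    Finset.card_union_of_disjoint hdisj, MP_card hA]

lemma hasTriple_singleton (hA : IsNet 3 4 A C) {i : Fin 3} (h : HasConcurrentTriple (C i)) :
    ∃ w : ProjPlane, TG C i = {w} := by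
  obtain ⟨w, hw⟩ := (hasTriple_iff_TG hA i).1 h
  exact ⟨w, Set.eq_singleton_iff_unique_mem.2 ⟨hw, fun q hq => TG_subsingleton hA i q hq w hw⟩⟩

lemma noTriple_empty (hA : IsNet 3 4 A C) {i : Fin 3} (h : ¬HasConcurrentTriple (C i)) :
    TG C i = ∅ :=
  Set.not_nonempty_iff_eq_empty.1 (fun hne => h ((hasTriple_iff_TG hA i).2 hne))

lemma card3_set_eq (hA : IsNet 3 4 A C)
    (hm : ∀ p : ProjPlane, IsMultPoint A p → mult A p = 2 ∨ mult A p = 3) (i : Fin 3) :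
    {p : ProjPlane | (linesThrough (C i) p).card = 3} = TG C i := by
  ext p
  constructor
  · intro hp
    have h3 : (linesThrough (C i) p).card = 3 := hp
    show 3 ≤ _
    omega
  · intro hp
    exact (within_filter_eq hA hm hp).2.1

end S7

/-- A (3,4)-net with only double and triple points satisfies exactly one of:
(1) no class has a concurrent triple and there are 16 triple points;
(2) each class has exactly one concurrent triple and there are 19 triple points;
(3) exactly one class has a concurrent triple and there are 17 triple points.
(The three alternatives are mutually exclusive since the triple point counts differ.) -/
theorem statement7 (A : Finset (Set ProjPlane)) (C : Fin 3 → Finset (Set ProjPlane))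
    (hA : IsNet 3 4 A C)
    (hmult : ∀ p : ProjPlane, IsMultPoint A p → mult A p = 2 ∨ mult A p = 3) :
    ((∀ i, ¬ HasConcurrentTriple (C i)) ∧
      {p : ProjPlane | mult A p = 3}.ncard = 16) ∨
    ((∀ i, {p : ProjPlane | (linesThrough (C i) p).card = 3}.ncard = 1) ∧
      {p : ProjPlane | mult A p = 3}.ncard = 19) ∨
    ((∃ i, HasConcurrentTriple (C i) ∧ ∀ j, j ≠ i → ¬ HasConcurrentTriple (C j)) ∧
      {p : ProjPlane | mult A p = 3}.ncard = 17) := by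
  classical
  by_cases h0 : HasConcurrentTriple (C 0) <;>
    by_cases h1 : HasConcurrentTriple (C 1) <;>
    by_cases h2 : HasConcurrentTriple (C 2)
  -- case: all three classes
  · refine Or.inr (Or.inl ⟨?_, ?_⟩)
    · intro i
      rw [S7.card3_set_eq hA hmult i]
      have hi : HasConcurrentTriple (C i) := by fin_cases i <;> assumption
      obtain ⟨w, hw⟩ := S7.hasTriple_singleton hA hi
      rw [hw]
      exact Set.ncard_singleton w
    · obtain ⟨w0, hw0⟩ := S7.hasTriple_singleton hA h0
      obtain ⟨w1, hw1⟩ := S7.hasTriple_singleton hA h1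
      obtain ⟨w2, hw2⟩ := S7.hasTriple_singleton hA h2
      have hw0m : w0 ∈ S7.TG C 0 := by rw [hw0]; rfl
      have hw1m : w1 ∈ S7.TG C 1 := by rw [hw1]; rfl
      have hw2m : w2 ∈ S7.TG C 2 := by rw [hw2]; rfl
      have h01 : w0 ≠ w1 := fun h =>
        S7.TG_disjoint hA hmult (by decide : (0 : Fin 3) ≠ 1) hw0m (h ▸ hw1m)
      have h02 : w0 ≠ w2 := fun h =>
        S7.TG_disjoint hA hmult (by decide : (0 : Fin 3) ≠ 2) hw0m (h ▸ hw2m)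
      have h12 : w1 ≠ w2 := fun h =>
        S7.TG_disjoint hA hmult (by decide : (1 : Fin 3) ≠ 2) hw1m (h ▸ hw2m)
      have hcard : ({w0, w1, w2} : Finset ProjPlane).card = 3 := by
        rw [Finset.card_insert_of_notMem (by simp [h01, h02]),
          Finset.card_insert_of_notMem (by simp [h12]), Finset.card_singleton]
      rw [S7.triple_ncard hA hmult ({w0, w1, w2} : Finset ProjPlane) ?_, hcard]
      rw [hw0, hw1, hw2]
      ext x
      simp only [Set.mem_union, Set.mem_singleton_iff, Finset.coe_insert, Set.mem_insert_iff,
        Finset.coe_singleton]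
      tauto
  -- case: classes 0 and 1 only: impossible
  · exact absurd (S7.two_triples hA (by decide) (by decide) (by decide) h0 h1) h2
  -- case: classes 0 and 2 only: impossible
  · exact absurd (S7.two_triples hA (by decide : (0:Fin 3) ≠ 2) (by decide : (0:Fin 3) ≠ 1)
      (by decide : (2:Fin 3) ≠ 1) h0 h2) h1
  -- case: class 0 only
  · refine Or.inr (Or.inr ⟨⟨0, h0, ?_⟩, ?_⟩)
    · intro j hj
      fin_cases j
      · exact absurd rfl hj
      · exact h1
      · exact h2
    · obtain ⟨w0, hw0⟩ := S7.hasTriple_singleton hA h0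
      rw [S7.triple_ncard hA hmult ({w0} : Finset ProjPlane) ?_, Finset.card_singleton]
      rw [hw0, S7.noTriple_empty hA h1, S7.noTriple_empty hA h2]
      simp
  -- case: classes 1 and 2 only: impossible
  · exact absurd (S7.two_triples hA (by decide : (1:Fin 3) ≠ 2) (by decide : (1:Fin 3) ≠ 0)
      (by decide : (2:Fin 3) ≠ 0) h1 h2) h0
  -- case: class 1 only
  · refine Or.inr (Or.inr ⟨⟨1, h1, ?_⟩, ?_⟩)
    · intro j hj
      fin_cases j
      · exact h0
      · exact absurd rfl hj
      · exact h2
    · obtain ⟨w1, hw1⟩ := S7.hasTriple_singleton hA h1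
      rw [S7.triple_ncard hA hmult ({w1} : Finset ProjPlane) ?_, Finset.card_singleton]
      rw [hw1, S7.noTriple_empty hA h0, S7.noTriple_empty hA h2]
      simp
  -- case: class 2 only
  · refine Or.inr (Or.inr ⟨⟨2, h2, ?_⟩, ?_⟩)
    · intro j hj
      fin_cases j
      · exact h0
      · exact h1
      · exact absurd rfl hj
    · obtain ⟨w2, hw2⟩ := S7.hasTriple_singleton hA h2
      rw [S7.triple_ncard hA hmult ({w2} : Finset ProjPlane) ?_, Finset.card_singleton]
      rw [hw2, S7.noTriple_empty hA h0, S7.noTriple_empty hA h1]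
      simp
  -- case: no class
  · refine Or.inl ⟨fun i => by fin_cases i <;> assumption, ?_⟩
    rw [S7.triple_ncard hA hmult (∅ : Finset ProjPlane) ?_, Finset.card_empty]
    rw [S7.noTriple_empty hA h0, S7.noTriple_empty hA h1, S7.noTriple_empty hA h2]
    simp
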